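/- arXiv:1904.13116 — 3 statements merged into one kernel-verified Lean document; each statement's English description precedes it below -/
import Mathlib

section
/- Restriction of the Kenig–Pipher condition to subdomains: there is a constant C > 0 depending only on n with the following property. Let E ⊆ ℝ^{n+1} be nonempty and closed, and let A be a real (n+1)×(n+1) matrix-valued function on ℝ^{n+1}∖E that is λ-elliptic and locally Lipschitz there (so its gradient ∇A exists a.e. by Rademacher's theorem), with |∇A(X)|·dist(X,E) ≤ Λ₁ for a.e. X ∉ E and sup over x ∈ E, r > 0 of r^{−n}∫_{B(x,r)∖E}|∇A(Y)|² dist(Y,E) dY ≤ Λ₂. Then for every open subset D ⊆ ℝ^{n+1}∖E one has |∇A(X)|·dist(X,∂D) ≤ Λ₁ for a.e. X ∈ D and ‖|∇A|‖_{CME(D)} ≤ C(Λ₂ + Λ₁²); in particular A belongs to the Kenig–Pipher class KP(D). -/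
open MeasureTheory Metric Set
open scoped ENNReal NNReal

noncomputable section

/-- The ambient Euclidean space `ℝ^{n+1}`. -/
abbrev ES (n : ℕ) : Type := EuclideanSpace ℝ (Fin (n + 1))

namespace Paper

variable {n : ℕ}

/-- `E` is an `n`-dimensional Ahlfors–David regular (ADR) set with constant `C₁`. -/
def ADR (n : ℕ) (E : Set (ES n)) (C₁ : ℝ) : Prop :=
  E.Nonempty ∧ IsClosed E ∧ 1 ≤ C₁ ∧
    ∀ x ∈ E, ∀ r : ℝ, 0 < r → ENNReal.ofReal r < EMetric.diam E →
      ENNReal.ofReal (C₁⁻¹ * r ^ n) ≤ μH[(n : ℝ)] (E ∩ ball x r) ∧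
        μH[(n : ℝ)] (E ∩ ball x r) ≤ ENNReal.ofReal (C₁ * r ^ n)

/-- `E` is `n`-dimensional uniformly rectifiable (UR) with character `(θ, M₁, C₁)`:
big pieces of Lipschitz images. -/
def UR (n : ℕ) (E : Set (ES n)) (θ M₁ C₁ : ℝ) : Prop :=
  ADR n E C₁ ∧ 1 ≤ θ ∧ 1 ≤ M₁ ∧
    ∀ x ∈ E, ∀ r : ℝ, 0 < r → ENNReal.ofReal r < EMetric.diam E →
      ∃ ρ : EuclideanSpace ℝ (Fin n) → ES n,
        LipschitzWith M₁.toNNReal ρ ∧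
          ENNReal.ofReal (θ⁻¹ * r ^ n) ≤
            μH[(n : ℝ)] (E ∩ ball x r ∩ ρ '' ball (0 : EuclideanSpace ℝ (Fin n)) r)

/-- `E` is `n`-dimensional UR with UR character at most `N`. -/
def URCharLe (n : ℕ) (E : Set (ES n)) (N : ℝ) : Prop :=
  ∃ θ M₁ C₁ : ℝ, UR n E θ M₁ C₁ ∧ θ ≤ N ∧ M₁ ≤ N ∧ C₁ ≤ N

/-- The (interior) corkscrew condition with constant `c`. -/
def Corkscrew (Ω : Set (ES n)) (c : ℝ) : Prop :=
  ∀ x ∈ frontier Ω, ∀ r : ℝ, 0 < r → ENNReal.ofReal r < EMetric.diam (frontier Ω) →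
    ∃ X : ES n, ball X (c * r) ⊆ ball x r ∩ Ω

/-- Distance between two sets. -/
def setDist (s t : Set (ES n)) : ℝ := sInf {d : ℝ | ∃ p ∈ s, ∃ q ∈ t, d = dist p q}

/-- `log₂⁺`. -/
def log2pos (t : ℝ) : ℝ := max 0 (Real.logb 2 t)

/-- The Harnack chain condition with constant `C`. -/
def HarnackChain (Ω : Set (ES n)) (C : ℝ) : Prop :=
  ∀ X₁ ∈ Ω, ∀ X₂ ∈ Ω,
    ∃ (N : ℕ) (c : Fin (N + 1) → ES n) (ρ : Fin (N + 1) → ℝ),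
      ((N : ℝ) + 1 ≤ C * (2 + log2pos (dist X₁ X₂ /
          min (Metric.infDist X₁ (frontier Ω)) (Metric.infDist X₂ (frontier Ω))))) ∧
      (∀ k, ball (c k) (ρ k) ⊆ Ω) ∧
      X₁ ∈ ball (c 0) (ρ 0) ∧ X₂ ∈ ball (c (Fin.last N)) (ρ (Fin.last N)) ∧
      (∀ k : Fin N,
        (ball (c k.castSucc) (ρ k.castSucc) ∩ ball (c k.succ) (ρ k.succ)).Nonempty) ∧
      ∀ k, C⁻¹ * Metric.diam (ball (c k) (ρ k)) ≤ setDist (ball (c k) (ρ k)) (frontier Ω) ∧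
        setDist (ball (c k) (ρ k)) (frontier Ω) ≤ C * Metric.diam (ball (c k) (ρ k))

/-- `D` is a chord-arc domain with CAD character at most `N`: Harnack chains with
constant `N`, interior and exterior corkscrews with constant `N⁻¹`, and ADR boundary
with constant `N`. -/
def CAD (n : ℕ) (D : Set (ES n)) (N : ℝ) : Prop :=
  IsOpen D ∧ 1 ≤ N ∧ HarnackChain D N ∧ Corkscrew D N⁻¹ ∧
    Corkscrew ((closure D)ᶜ) N⁻¹ ∧ ADR n (frontier D) N

/-- Last coordinate (the "vertical" direction of a graph). -/
def lastCoord (y : ES n) : ℝ := y (Fin.last n)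

/-- First `n` coordinates. -/
def initCoords (y : ES n) : EuclideanSpace ℝ (Fin n) := WithLp.toLp 2 (fun i : Fin n => y i.castSucc)

/-- The region above the graph of `ψ` in standard coordinates. -/
def upperGraph (ψ : EuclideanSpace ℝ (Fin n) → ℝ) : Set (ES n) :=
  {y | ψ (initCoords y) < lastCoord y}

/-- The open cylinder of radius `ρ` and height `h`, centered at `x`, whose axis is
parallel to the `t`-axis of the coordinate system given by the rigid motion `e`. -/
def graphCylinder (e : ES n ≃ᵃⁱ[ℝ] ES n) (x : ES n) (ρ h : ℝ) : Set (ES n) :=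
  e '' {y | dist (initCoords y) (initCoords (e.symm x)) < ρ ∧
      |lastCoord y - lastCoord (e.symm x)| < h / 2}

/-- `Ω` is a bounded Lipschitz domain with Lipschitz character `(M, m, C₀)`. -/
def IsBddLipDomain (n : ℕ) (Ω : Set (ES n)) (M : ℝ) (m : ℕ) (C₀ : ℝ) : Prop :=
  IsOpen Ω ∧ IsConnected Ω ∧ Bornology.IsBounded Ω ∧ 1 ≤ M ∧ 1 ≤ m ∧ 1 ≤ C₀ ∧
    ∃ rΩ : ℝ, 0 < rΩ ∧
      ∃ (x : Fin m → ES n) (r : Fin m → ℝ),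
        (∀ j, x j ∈ frontier Ω) ∧
        (∀ j, C₀⁻¹ * rΩ < r j ∧ r j < C₀ * rΩ) ∧
        (frontier Ω ⊆ ⋃ j, ball (x j) (r j)) ∧
        ∀ j, ∃ (e : ES n ≃ᵃⁱ[ℝ] ES n) (ψ : EuclideanSpace ℝ (Fin n) → ℝ),
          LipschitzWith M.toNNReal ψ ∧ x j ∈ frontier (e '' upperGraph ψ) ∧
            graphCylinder e (x j) (2 * r j) (8 * (M + 1) * r j) ∩ Ω =
              graphCylinder e (x j) (2 * r j) (8 * (M + 1) * r j) ∩ (e '' upperGraph ψ)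

/-- `Ω` is a bounded Lipschitz domain with Lipschitz character at most `M₀`. -/
def LipCharLe (n : ℕ) (Ω : Set (ES n)) (M₀ : ℝ) : Prop :=
  ∃ (M : ℝ) (m : ℕ) (C₀ : ℝ),
    IsBddLipDomain n Ω M m C₀ ∧ M ≤ M₀ ∧ (m : ℝ) ≤ M₀ ∧ C₀ ≤ M₀

/-- The Carleson measure norm `‖F‖_{CME(Ω)}`, as an element of `[0,∞]`. -/
def CME (n : ℕ) (Ω : Set (ES n)) (F : ES n → ℝ) : ℝ≥0∞ :=
  ⨆ (x : ES n) (_ : x ∈ frontier Ω) (r : ℝ) (_ : 0 < r),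
    (ENNReal.ofReal (r ^ n))⁻¹ *
      ∫⁻ Y in ball x r ∩ Ω, ENNReal.ofReal (F Y ^ 2 * Metric.infDist Y (frontier Ω))

/-- The Carleson measure norm `‖F‖_{CME(ℝ^{n+1}∖E)}`, with distances taken to `E`. -/
def CMEc (n : ℕ) (E : Set (ES n)) (F : ES n → ℝ) : ℝ≥0∞ :=
  ⨆ (x : ES n) (_ : x ∈ E) (r : ℝ) (_ : 0 < r),
    (ENNReal.ofReal (r ^ n))⁻¹ *
      ∫⁻ Y in ball x r \ E, ENNReal.ofReal (F Y ^ 2 * Metric.infDist Y E)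

/-- `F` is locally square-integrable on `Ω`. -/
def LocL2 (n : ℕ) (Ω : Set (ES n)) (F : ES n → ℝ) : Prop :=
  LocallyIntegrableOn (fun Y => F Y ^ 2) Ω volume

variable {n : ℕ}

/-- The (possibly truncated) non-tangential cone of aperture `κ` with vertex `x`,
relative to the open set `Ω` with "boundary" `B`; when `Ω` is unbounded but `B` is
bounded, the cone is truncated at scale `2 diam B`. -/
def cone (Ω B : Set (ES n)) (κ : ℝ) (x : ES n) : Set (ES n) :=
  {Y | Y ∈ Ω ∧ dist Y x ≤ (1 + κ) * Metric.infDist Y B ∧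
    (¬Bornology.IsBounded Ω ∧ Bornology.IsBounded B → dist Y x < 2 * Metric.diam B)}

/-- Truncated cone `Γ^r`. -/
def coneT (Ω B : Set (ES n)) (κ : ℝ) (x : ES n) (r : ℝ) : Set (ES n) :=
  cone Ω B κ x ∩ ball x r

/-- Non-tangential maximal function `N_{*,Ω,κ}H(x)`, valued in `[0,∞]`. -/
def ntMax (Ω B : Set (ES n)) (κ : ℝ) (H : ES n → ℝ) (x : ES n) : ℝ≥0∞ :=
  ⨆ (Y : ES n) (_ : Y ∈ cone Ω B κ x), ENNReal.ofReal |H Y|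

/-- Truncated non-tangential maximal function `N^r_{*,Ω,κ}H(x)`. -/
def ntMaxT (Ω B : Set (ES n)) (κ r : ℝ) (H : ES n → ℝ) (x : ES n) : ℝ≥0∞ :=
  ⨆ (Y : ES n) (_ : Y ∈ coneT Ω B κ x r), ENNReal.ofReal |H Y|

/-- Square function `S_{Ω,κ}(x)`, applied to the scalar field `g = |∇u|`. -/
def sqFn (Ω B : Set (ES n)) (κ : ℝ) (g : ES n → ℝ) (x : ES n) : ℝ≥0∞ :=
  (∫⁻ Y in cone Ω B κ x,
      ENNReal.ofReal (g Y ^ 2 * Metric.infDist Y B ^ ((1 : ℤ) - n))) ^ (1 / 2 : ℝ)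

/-- Truncated square function `S^r_{Ω,κ}(x)`. -/
def sqFnT (Ω B : Set (ES n)) (κ r : ℝ) (g : ES n → ℝ) (x : ES n) : ℝ≥0∞ :=
  (∫⁻ Y in coneT Ω B κ x r,
      ENNReal.ofReal (g Y ^ 2 * Metric.infDist Y B ^ ((1 : ℤ) - n))) ^ (1 / 2 : ℝ)

/-- `L^q` norm over `A` with respect to `n`-dimensional Hausdorff measure. -/
def LqNorm (q : ℝ) (A : Set (ES n)) (f : ES n → ℝ≥0∞) : ℝ≥0∞ :=
  (∫⁻ y in A, f y ^ q ∂μH[(n : ℝ)]) ^ (1 / q)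

/-- Closed axis-parallel cube centered at `z` of side length `l`. -/
def cube (z : ES n) (l : ℝ) : Set (ES n) := {Y | ∀ i, |Y i - z i| ≤ l / 2}

/-- Interior boundedness (Moser-type) condition with constant `C₀`. -/
def IntBdd (n : ℕ) (D : Set (ES n)) (u : ES n → ℝ) (C₀ : ℝ) : Prop :=
  ∀ (c : ℝ) (z : ES n) (l : ℝ), 0 < l → cube z (2 * l) ⊆ D →
    ∀ X ∈ cube z l,
      |u X - c| ≤ C₀ * Real.sqrt ((∫ Y in cube z (2 * l), (u Y - c) ^ 2) / l ^ (n + 1))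

/-- Interior reverse Hölder condition with exponent `p` and constant `C₀'`. -/
def RevHolder (n : ℕ) (D : Set (ES n)) (u : ES n → ℝ) (p C₀' : ℝ) : Prop :=
  ∀ (z : ES n) (l : ℝ), 0 < l → cube z (2 * l) ⊆ D →
    ((∫ Y in cube z l, ‖gradient u Y‖ ^ p) / l ^ (n + 1)) ^ (1 / p) ≤
      C₀' * Real.sqrt ((∫ Y in cube z (2 * l), ‖gradient u Y‖ ^ 2) / l ^ (n + 1))

/-- `A` is `λ`-elliptic (a.e.) on `O`. -/
def Elliptic (n : ℕ) (O : Set (ES n)) (A : ES n → Fin (n + 1) → Fin (n + 1) → ℝ)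
    (lam : ℝ) : Prop :=
  ∀ᵐ X ∂(volume.restrict O), ∀ ξ ζ : ES n,
    lam⁻¹ * ‖ξ‖ ^ 2 ≤ ∑ i, (∑ j, A X i j * ξ j) * ξ i ∧
      |∑ i, (∑ j, A X i j * ξ j) * ζ i| ≤ lam * ‖ξ‖ * ‖ζ‖

/-- `|∇A(X)|` (via the a.e.-defined gradients of the entries). -/
def gradA (n : ℕ) (A : ES n → Fin (n + 1) → Fin (n + 1) → ℝ) (X : ES n) : ℝ :=
  Real.sqrt (∑ i, ∑ j, ‖gradient (fun Y => A Y i j) X‖ ^ 2)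

/-- `f` is locally Lipschitz on the open set `O`. -/
def LocLipOn (n : ℕ) (f : ES n → ℝ) (O : Set (ES n)) : Prop :=
  ∀ x ∈ O, ∃ (K : ℝ≥0) (r : ℝ), 0 < r ∧ ball x r ⊆ O ∧ LipschitzOnWith K f (ball x r)

/-- `A` belongs to the Kenig–Pipher class `KP(O)` with constants `(Λ₁, Λ₂)`. -/
def KP (n : ℕ) (O : Set (ES n)) (A : ES n → Fin (n + 1) → Fin (n + 1) → ℝ)
    (Λ₁ Λ₂ : ℝ) : Prop :=
  0 ≤ Λ₁ ∧ 0 ≤ Λ₂ ∧ (∀ i j, LocLipOn n (fun Y => A Y i j) O) ∧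
    (∀ᵐ X ∂(volume.restrict O), gradA n A X * Metric.infDist X (frontier O) ≤ Λ₁) ∧
    CME n O (gradA n A) ≤ ENNReal.ofReal Λ₂

/-- `A` belongs to `KP(ℝ^{n+1}∖E)` with constants `(Λ₁, Λ₂)`, distances taken to `E`. -/
def KPc (n : ℕ) (E : Set (ES n)) (A : ES n → Fin (n + 1) → Fin (n + 1) → ℝ)
    (Λ₁ Λ₂ : ℝ) : Prop :=
  0 ≤ Λ₁ ∧ 0 ≤ Λ₂ ∧ (∀ i j, LocLipOn n (fun Y => A Y i j) Eᶜ) ∧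
    (∀ᵐ X ∂(volume.restrict Eᶜ), gradA n A X * Metric.infDist X E ≤ Λ₁) ∧
    CMEc n E (gradA n A) ≤ ENNReal.ofReal Λ₂

/-- `u` is a weak solution of `-div(A∇u) = 0` in `O`. -/
def WeakSol (n : ℕ) (O : Set (ES n)) (A : ES n → Fin (n + 1) → Fin (n + 1) → ℝ)
    (u : ES n → ℝ) : Prop :=
  ∀ Ψ : ES n → ℝ, ContDiff ℝ (⊤ : ℕ∞) Ψ → HasCompactSupport Ψ → tsupport Ψ ⊆ O →
    ∫ X in O, ∑ i, (∑ j, A X i j * gradient u X j) * gradient Ψ X i = 0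

/-- `u` is a weak subsolution of `-div(A∇u) = 0` in `O`. -/
def WeakSubSol (n : ℕ) (O : Set (ES n)) (A : ES n → Fin (n + 1) → Fin (n + 1) → ℝ)
    (u : ES n → ℝ) : Prop :=
  ∀ Ψ : ES n → ℝ, ContDiff ℝ (⊤ : ℕ∞) Ψ → HasCompactSupport Ψ → tsupport Ψ ⊆ O →
    (∀ X, 0 ≤ Ψ X) →
    ∫ X in O, ∑ i, (∑ j, A X i j * gradient u X j) * gradient Ψ X i ≤ 0


/-- Partial derivative `∂_i f` (via the a.e./junk-valued full derivative). -/
def pd (n : ℕ) (i : Fin (n + 1)) (f : ES n → ℝ) : ES n → ℝ :=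
  fun X => fderiv ℝ f X (EuclideanSpace.single i (1 : ℝ))

/-- Iterated partial derivative `∂_i^k f`. -/
def pdPow (n : ℕ) (i : Fin (n + 1)) : ℕ → (ES n → ℝ) → ES n → ℝ
  | 0, f => f
  | k + 1, f => pd n i (pdPow n i k f)

/-- The multi-index derivative `∂^α f`. -/
def mDeriv (n : ℕ) (α : Fin (n + 1) → ℕ) (f : ES n → ℝ) : ES n → ℝ :=
  (List.finRange (n + 1)).foldr (fun i g => pdPow n i (α i) g) f

/-- The finset of multi-indices `α ∈ ℕ₀^{n+1}` with `|α| = m`. -/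
def MIdx (n m : ℕ) : Finset (Fin (n + 1) → ℕ) := Finset.Nat.antidiagonalTuple (n + 1) m

/-- Derivative along an ordered sequence of directions. -/
def seqDeriv (n : ℕ) : (ℓ : ℕ) → (Fin ℓ → Fin (n + 1)) → (ES n → ℝ) → ES n → ℝ
  | 0, _, f => f
  | ℓ + 1, v, f => pd n (v 0) (seqDeriv n ℓ (fun i => v i.succ) f)

/-- `|∇^ℓ u(X)|² = Σ_j Σ_{|α|=ℓ} (ℓ!/α!) |∂^α u_j(X)|²`, written as the sum of the
squares of all ordered iterated partial derivatives of order `ℓ`. -/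
def gradVecNormSq (n K ℓ : ℕ) (u : ES n → Fin K → ℝ) (X : ES n) : ℝ :=
  ∑ j : Fin K, ∑ v : Fin ℓ → Fin (n + 1), (seqDeriv n ℓ v (fun Y => u Y j) X) ^ 2

/-- `|∇^ℓ u(X) - ∇^ℓ u(X')|`. -/
def gradVecDiffNorm (n K ℓ : ℕ) (u : ES n → Fin K → ℝ) (X X' : ES n) : ℝ :=
  Real.sqrt (∑ j : Fin K, ∑ v : Fin ℓ → Fin (n + 1),
    (seqDeriv n ℓ v (fun Y => u Y j) X - seqDeriv n ℓ v (fun Y => u Y j) X') ^ 2)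

/-- The Legendre–Hadamard ellipticity condition with constant `lam`. -/
def LegendreHadamard (n K m : ℕ)
    (a : Fin K → Fin K → (Fin (n + 1) → ℕ) → (Fin (n + 1) → ℕ) → ℝ) (lam : ℝ) : Prop :=
  ∀ (ξ : ES n) (ζ : Fin K → ℝ),
    lam * ‖ξ‖ ^ (2 * m) * ∑ j, ζ j ^ 2 ≤
      ∑ j, ∑ k, ∑ α ∈ MIdx n m, ∑ β ∈ MIdx n m,
        a j k α β * (∏ i, ξ i ^ α i) * (∏ i, ξ i ^ β i) * ζ j * ζ k

/-- `u` solves the constant-coefficient `2m`-order `K×K` system `Lu = 0` on `O`. -/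
def SystemSol (n K m : ℕ)
    (a : Fin K → Fin K → (Fin (n + 1) → ℕ) → (Fin (n + 1) → ℕ) → ℝ)
    (O : Set (ES n)) (u : ES n → Fin K → ℝ) : Prop :=
  ∀ j : Fin K, ∀ X ∈ O,
    ∑ k : Fin K, ∑ α ∈ MIdx n m, ∑ β ∈ MIdx n m,
      a j k α β * mDeriv n α (mDeriv n β (fun Y => u Y k)) X = 0

/-- Partial derivative of a complex-valued function. -/
def pdC (n : ℕ) (i : Fin (n + 1)) (f : ES n → ℂ) : ES n → ℂ :=
  fun X => fderiv ℝ f X (EuclideanSpace.single i (1 : ℝ))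

/-- Iterated complex partial derivative. -/
def pdPowC (n : ℕ) (i : Fin (n + 1)) : ℕ → (ES n → ℂ) → ES n → ℂ
  | 0, f => f
  | k + 1, f => pdC n i (pdPowC n i k f)

/-- The multi-index derivative `∂^α f` of a complex-valued function. -/
def mDerivC (n : ℕ) (α : Fin (n + 1) → ℕ) (f : ES n → ℂ) : ES n → ℂ :=
  (List.finRange (n + 1)).foldr (fun i g => pdPowC n i (α i) g) f


section Helpers

variable {n : ℕ}

lemma exists_frontier_dist_le {D : Set (ES n)} (hD : IsOpen D) {X z : ES n}
    (hX : X ∈ D) (hz : z ∉ D) : ∃ y ∈ frontier D, dist X y ≤ dist X z := by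
  by_cases hzf : z ∈ frontier D
  · exact ⟨z, hzf, le_rfl⟩
  have hzc : z ∉ closure D := by
    intro hc
    exact hzf ⟨hc, by rwa [hD.interior_eq]⟩
  have hpc : IsPreconnected (segment ℝ X z) := (convex_segment X z).isPreconnected
  have hne : (segment ℝ X z ∩ frontier D).Nonempty := by
    by_contra hemp
    rw [Set.not_nonempty_iff_eq_empty] at hemp
    have cover : segment ℝ X z ⊆ D ∪ (closure D)ᶜ := by
      intro y hy
      by_cases h1 : y ∈ D
      · exact Or.inl h1
      · refine Or.inr fun hc => ?_
        have : y ∈ segment ℝ X z ∩ frontier D :=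
          ⟨hy, ⟨hc, by rwa [hD.interior_eq]⟩⟩
        simp [hemp] at this
    obtain ⟨w, hws, hwD, hwc⟩ := hpc D (closure D)ᶜ hD isClosed_closure.isOpen_compl cover
      ⟨X, left_mem_segment ℝ X z, hX⟩ ⟨z, right_mem_segment ℝ X z, hzc⟩
    exact hwc (subset_closure hwD)
  obtain ⟨y, hys, hyf⟩ := hne
  refine ⟨y, hyf, ?_⟩
  obtain ⟨a, b, ha, hb, hab, hy⟩ := hys
  have ha' : a = 1 - b := by linarith
  have hXy : X - y = b • (X - z) := by
    rw [← hy, ha', sub_smul, one_smul, smul_sub]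
    abel
  have hb1 : b ≤ 1 := by linarith
  calc dist X y = ‖X - y‖ := dist_eq_norm X y
    _ = ‖b • (X - z)‖ := by rw [hXy]
    _ = b * ‖X - z‖ := by rw [norm_smul, Real.norm_eq_abs, abs_of_nonneg hb]
    _ ≤ 1 * ‖X - z‖ := by
        exact mul_le_mul_of_nonneg_right hb1 (norm_nonneg _)
    _ = dist X z := by rw [one_mul, dist_eq_norm]

lemma infDist_frontier_le_infDist {D E : Set (ES n)} (hD : IsOpen D) (hE : E.Nonempty)
    (hDE : D ⊆ Eᶜ) {X : ES n} (hX : X ∈ D) :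
    Metric.infDist X (frontier D) ≤ Metric.infDist X E := by
  by_contra hlt
  push_neg at hlt
  obtain ⟨z, hzE, hzd⟩ := (Metric.infDist_lt_iff hE).mp hlt
  have hz : z ∉ D := fun hzD => (hDE hzD) hzE
  obtain ⟨y, hyf, hyd⟩ := exists_frontier_dist_le hD hX hz
  exact absurd (Metric.infDist_le_dist_of_mem hyf) (by linarith)

end Helpers

/-- Restriction of the Kenig–Pipher condition to subdomains. -/

theorem KP_restriction (n : ℕ) (hn : 1 ≤ n) :
    ∃ C : ℝ, 0 < C ∧
      ∀ (E : Set (ES n)) (A : ES n → Fin (n + 1) → Fin (n + 1) → ℝ) (lam Λ₁ Λ₂ : ℝ),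
        E.Nonempty → IsClosed E → 1 ≤ lam →
        Elliptic n Eᶜ A lam → KPc n E A Λ₁ Λ₂ →
        ∀ D : Set (ES n), IsOpen D → D ⊆ Eᶜ →
          (∀ᵐ X ∂(volume.restrict D), gradA n A X * Metric.infDist X (frontier D) ≤ Λ₁) ∧
            CME n D (gradA n A) ≤ ENNReal.ofReal (C * (Λ₂ + Λ₁ ^ 2)) ∧
            KP n D A Λ₁ (C * (Λ₂ + Λ₁ ^ 2)) := by
    classical
  set ω : ℝ := (volume (ball (0 : ES n) 1)).toReal with hω
  have hω0 : 0 ≤ ω := ENNReal.toReal_nonneg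
  have h3pos : (0:ℝ) < 3 ^ n := by positivity
  refine ⟨(3 : ℝ) ^ n + ω, by positivity, ?_⟩
  intro E A lam Λ₁ Λ₂ hEne hEcl hlam hell hKP D hD hDE
  set C : ℝ := (3 : ℝ) ^ n + ω with hC
  have hC3 : (3 : ℝ) ^ n ≤ C := le_add_of_nonneg_right hω0
  have hωC : ω ≤ C := by nlinarith
  have hC0 : 0 < C := by positivity
  obtain ⟨hΛ₁0, hΛ₂0, hLip, hae, hCME⟩ := hKP
  have hgrad0 : ∀ X, 0 ≤ gradA n A X := fun X => Real.sqrt_nonneg _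
  have hfr : ∀ X ∈ D, Metric.infDist X (frontier D) ≤ Metric.infDist X E :=
    fun X hX => infDist_frontier_le_infDist hD hEne hDE hX
  have hCsum : 0 ≤ C * (Λ₂ + Λ₁ ^ 2) := mul_nonneg hC0.le (add_nonneg hΛ₂0 (sq_nonneg _))
  have hvol1 : volume (ball (0 : ES n) 1) = ENNReal.ofReal ω :=
    (ENNReal.ofReal_toReal measure_ball_lt_top.ne).symm
  -- Part 1
  have haeD : ∀ᵐ X ∂(volume.restrict D), gradA n A X * Metric.infDist X E ≤ Λ₁ :=
    hae.filter_mono (ae_mono (Measure.restrict_mono hDE le_rfl))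
  have part1 : ∀ᵐ X ∂(volume.restrict D),
      gradA n A X * Metric.infDist X (frontier D) ≤ Λ₁ := by
    filter_upwards [haeD, ae_restrict_mem hD.measurableSet] with X h1 h2
    exact le_trans (mul_le_mul_of_nonneg_left (hfr X h2) (hgrad0 X)) h1
  -- Part 2
  have part2 : CME n D (gradA n A) ≤ ENNReal.ofReal (C * (Λ₂ + Λ₁ ^ 2)) := by
    unfold CME
    refine iSup_le fun x => iSup_le fun hx => iSup_le fun r => iSup_le fun hr => ?_
    have hrn0 : (ENNReal.ofReal (r ^ n)) ≠ 0 := (ENNReal.ofReal_pos.mpr (by positivity)).ne'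
    rw [ENNReal.inv_mul_le_iff hrn0 ENNReal.ofReal_ne_top,
      ← ENNReal.ofReal_mul (by positivity : (0:ℝ) ≤ r ^ n)]
    have hmeas : MeasurableSet (ball x r ∩ D) := measurableSet_ball.inter hD.measurableSet
    by_cases hcase : Metric.infDist x E < 2 * r
    · -- the boundary point is close to E
      obtain ⟨z, hzE, hzd⟩ := (Metric.infDist_lt_iff hEne).mp hcase
      have h3r : 0 < 3 * r := by linarith
      have hsub : ball x r ∩ D ⊆ ball z (3 * r) \ E := by
        rintro Y ⟨hY1, hY2⟩
        refine ⟨?_, hDE hY2⟩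
        rw [mem_ball] at hY1 ⊢
        calc dist Y z ≤ dist Y x + dist x z := dist_triangle _ _ _
          _ < r + 2 * r := add_lt_add hY1 hzd
          _ = 3 * r := by ring
      have hterm : (ENNReal.ofReal ((3 * r) ^ n))⁻¹ *
          ∫⁻ Y in ball z (3 * r) \ E,
            ENNReal.ofReal (gradA n A Y ^ 2 * Metric.infDist Y E) ≤ ENNReal.ofReal Λ₂ := by
        refine le_trans ?_ hCME
        unfold CMEc
        exact le_iSup_of_le z (le_iSup_of_le hzE (le_iSup_of_le (3 * r)
          (le_iSup_of_le h3r le_rfl)))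
      have hint : (∫⁻ Y in ball z (3 * r) \ E,
            ENNReal.ofReal (gradA n A Y ^ 2 * Metric.infDist Y E))
          ≤ ENNReal.ofReal ((3 * r) ^ n) * ENNReal.ofReal Λ₂ :=
        (ENNReal.inv_mul_le_iff (ENNReal.ofReal_pos.mpr (by positivity)).ne'
          ENNReal.ofReal_ne_top).mp hterm
      calc (∫⁻ Y in ball x r ∩ D,
            ENNReal.ofReal (gradA n A Y ^ 2 * Metric.infDist Y (frontier D)))
          ≤ ∫⁻ Y in ball x r ∩ D,
            ENNReal.ofReal (gradA n A Y ^ 2 * Metric.infDist Y E) := by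
            refine lintegral_mono_ae ?_
            filter_upwards [ae_restrict_mem hmeas] with Y hY
            exact ENNReal.ofReal_le_ofReal
              (mul_le_mul_of_nonneg_left (hfr Y hY.2) (sq_nonneg _))
        _ ≤ ∫⁻ Y in ball z (3 * r) \ E,
            ENNReal.ofReal (gradA n A Y ^ 2 * Metric.infDist Y E) :=
            lintegral_mono_set hsub
        _ ≤ ENNReal.ofReal ((3 * r) ^ n) * ENNReal.ofReal Λ₂ := hint
        _ = ENNReal.ofReal ((3 * r) ^ n * Λ₂) :=
            (ENNReal.ofReal_mul (by positivity)).symm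
        _ ≤ ENNReal.ofReal (r ^ n * (C * (Λ₂ + Λ₁ ^ 2))) := by
            apply ENNReal.ofReal_le_ofReal
            have h1 : (3 * r) ^ n = 3 ^ n * r ^ n := mul_pow 3 r n
            have h2 : (0:ℝ) ≤ r ^ n := by positivity
            nlinarith [mul_nonneg h2 (mul_nonneg (sub_nonneg.mpr hC3) hΛ₂0),
              mul_nonneg h2 (mul_nonneg hC0.le (sq_nonneg Λ₁))]
    · -- the boundary point is far from E
      push_neg at hcase
      have hptwise : ∀ᵐ Y ∂(volume.restrict (ball x r ∩ D)),
          ENNReal.ofReal (gradA n A Y ^ 2 * Metric.infDist Y (frontier D))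
            ≤ ENNReal.ofReal (Λ₁ ^ 2 / r) := by
        have hsub' : ball x r ∩ D ⊆ Eᶜ := fun Y hY => hDE hY.2
        have hae' : ∀ᵐ Y ∂(volume.restrict (ball x r ∩ D)),
            gradA n A Y * Metric.infDist Y E ≤ Λ₁ :=
          hae.filter_mono (ae_mono (Measure.restrict_mono hsub' le_rfl))
        filter_upwards [hae', ae_restrict_mem hmeas] with Y h1 hY
        apply ENNReal.ofReal_le_ofReal
        have hYx : dist Y x < r := mem_ball.mp hY.1
        have ht : r ≤ Metric.infDist Y E := by
          have h := Metric.infDist_le_infDist_add_dist (x := x) (y := Y) (s := E)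
          rw [dist_comm] at h
          linarith
        have ht0 : (0:ℝ) ≤ Metric.infDist Y E := Metric.infDist_nonneg
        have h2 := hfr Y hY.2
        rw [le_div_iff₀ hr]
        have hg0 : 0 ≤ gradA n A Y := hgrad0 Y
        calc gradA n A Y ^ 2 * Metric.infDist Y (frontier D) * r
            ≤ gradA n A Y ^ 2 * Metric.infDist Y E * r :=
              mul_le_mul_of_nonneg_right
                (mul_le_mul_of_nonneg_left h2 (sq_nonneg _)) hr.le
          _ ≤ gradA n A Y ^ 2 * Metric.infDist Y E * Metric.infDist Y E :=
              mul_le_mul_of_nonneg_left ht (mul_nonneg (sq_nonneg _) ht0)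
          _ = (gradA n A Y * Metric.infDist Y E) ^ 2 := by ring
          _ ≤ Λ₁ ^ 2 := pow_le_pow_left₀ (mul_nonneg hg0 ht0) h1 2
      have hvol : volume (ball x r)
          = ENNReal.ofReal (r ^ (n + 1)) * volume (ball (0 : ES n) 1) := by
        rw [Measure.addHaar_ball volume x hr.le, finrank_euclideanSpace_fin]
      calc (∫⁻ Y in ball x r ∩ D,
            ENNReal.ofReal (gradA n A Y ^ 2 * Metric.infDist Y (frontier D)))
          ≤ ∫⁻ _ in ball x r ∩ D, ENNReal.ofReal (Λ₁ ^ 2 / r) := lintegral_mono_ae hptwise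
        _ = ENNReal.ofReal (Λ₁ ^ 2 / r) * volume (ball x r ∩ D) := setLIntegral_const _ _
        _ ≤ ENNReal.ofReal (Λ₁ ^ 2 / r) * volume (ball x r) :=
            mul_le_mul' le_rfl (measure_mono Set.inter_subset_left)
        _ = ENNReal.ofReal (Λ₁ ^ 2 / r) * (ENNReal.ofReal (r ^ (n + 1)) * ENNReal.ofReal ω) := by
            rw [hvol, hvol1]
        _ = ENNReal.ofReal (Λ₁ ^ 2 / r * (r ^ (n + 1) * ω)) := by
            rw [← ENNReal.ofReal_mul (show (0:ℝ) ≤ r ^ (n + 1) by positivity),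
              ← ENNReal.ofReal_mul (show (0:ℝ) ≤ Λ₁ ^ 2 / r by positivity)]
        _ ≤ ENNReal.ofReal (r ^ n * (C * (Λ₂ + Λ₁ ^ 2))) := by
            apply ENNReal.ofReal_le_ofReal
            have hrne : r ≠ 0 := hr.ne'
            have hkey : Λ₁ ^ 2 / r * (r ^ (n + 1) * ω) = Λ₁ ^ 2 * r ^ n * ω := by
              rw [pow_succ]
              field_simp
              ring
            rw [hkey]
            have h2 : (0:ℝ) ≤ r ^ n := by positivity
            nlinarith [mul_nonneg h2 (mul_nonneg (sub_nonneg.mpr hωC) (sq_nonneg Λ₁)),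
              mul_nonneg h2 (mul_nonneg hC0.le hΛ₂0)]
  -- Local Lipschitz on D
  have hloclip : ∀ i j, LocLipOn n (fun Y => A Y i j) D := by
    intro i j x hx
    obtain ⟨K, ρ, hρ, hballE, hlip⟩ := hLip i j x (hDE hx)
    obtain ⟨ε, hε, hballD⟩ := Metric.isOpen_iff.mp hD x hx
    exact ⟨K, min ρ ε, lt_min hρ hε,
      (ball_subset_ball (min_le_right _ _)).trans hballD,
      hlip.mono (ball_subset_ball (min_le_left _ _))⟩
  exact ⟨part1, part2, hΛ₁0, hCsum, hloclip, part1, part2⟩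

end Paper
end
end

section
/- Gårding inequality for constant-coefficient Legendre–Hadamard systems: let (a^{jk}_{αβ}) be real constants as in the context, satisfying the Legendre–Hadamard condition with constant λ. Then for every φ = (φ₁,…,φ_K) ∈ C_c^∞(ℝ^{n+1}; ℂ^K), Re Σ_{j,k=1}^K Σ_{|α|=|β|=m} a^{jk}_{αβ} ∫_{ℝ^{n+1}} conj(∂^α φ_j(X)) · ∂^β φ_k(X) dX ≥ λ Σ_{j=1}^K Σ_{|α|=m} (m!/α!) ∫_{ℝ^{n+1}} |∂^α φ_j(X)|² dX. -/
open MeasureTheory Metric Set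
open scoped ENNReal NNReal

noncomputable section

namespace Paper

variable {n : ℕ}

variable {n : ℕ}

section Nice
open Real Complex SchwartzMap
open scoped FourierTransform RealInnerProductSpace

def Nice (n : ℕ) (f : ES n → ℂ) : Prop :=
  ContDiff ℝ (⊤ : ℕ∞) f ∧ HasCompactSupport f

namespace Nice

variable {f g : ES n → ℂ}

theorem cont (hf : Nice n f) : Continuous f := hf.1.continuous

theorem integrable (hf : Nice n f) : Integrable f := hf.cont.integrable_of_hasCompactSupport hf.2

/-- A smooth compactly supported function as a Schwartz map. -/
def schwartz (hf : Nice n f) : SchwartzMap (ES n) ℂ where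
  toFun := f
  smooth' := hf.1
  decay' := by
    intro k N
    have h1 : Continuous fun x : ES n => ‖x‖ ^ k * ‖iteratedFDeriv ℝ N f x‖ :=
      (continuous_norm.pow k).mul (hf.1.continuous_iteratedFDeriv (by exact_mod_cast le_top)).norm
    have h2 : HasCompactSupport fun x : ES n => ‖x‖ ^ k * ‖iteratedFDeriv ℝ N f x‖ := by
      have hs : HasCompactSupport fun x : ES n => ‖iteratedFDeriv ℝ N f x‖ :=
        (hf.2.iteratedFDeriv N).comp_left (g := fun y => ‖y‖) norm_zero
      exact hs.mul_left
    obtain ⟨C, hC⟩ := h1.bounded_above_of_compact_support h2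
    refine ⟨C, fun x => ?_⟩
    have := hC x
    rwa [Real.norm_eq_abs, _root_.abs_of_nonneg (by positivity)] at this

theorem coe_schwartz (hf : Nice n f) : ⇑hf.schwartz = f := rfl

theorem ft_eq_schwartz (hf : Nice n f) :
    ⇑(fourierTransformCLM ℂ hf.schwartz) = 𝓕 f := by
  rw [fourierTransformCLM_apply]; rfl

theorem continuous_ft (hf : Nice n f) : Continuous (𝓕 f) := by
  rw [← hf.ft_eq_schwartz]; exact (fourierTransformCLM ℂ hf.schwartz).continuous

theorem integrable_ft (hf : Nice n f) : Integrable (𝓕 f) := by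
  rw [← hf.ft_eq_schwartz]; exact (fourierTransformCLM ℂ hf.schwartz).integrable

theorem bounded_ft (hf : Nice n f) : ∃ C, ∀ ξ, ‖𝓕 f ξ‖ ≤ C :=
  ⟨∫ x, ‖f x‖, fun ξ => VectorFourier.norm_fourierIntegral_le_integral_norm _ _ _ _ _⟩

theorem pd (hf : Nice n f) (i : Fin (n + 1)) : Nice n (pdC n i f) := by
  constructor
  · exact (hf.1.fderiv_right (m := (⊤:ℕ∞)) (by exact_mod_cast le_top)).clm_apply contDiff_const
  · exact (hf.2.fderiv ℝ).comp_left
      (g := fun L : ES n →L[ℝ] ℂ => L (EuclideanSpace.single i (1 : ℝ))) rfl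

theorem integrable_fderiv (hf : Nice n f) : Integrable (fderiv ℝ f) :=
  ((hf.1.fderiv_right (m := (⊤:ℕ∞)) (by norm_cast)).continuous).integrable_of_hasCompactSupport (hf.2.fderiv ℝ)

theorem ft_pd (hf : Nice n f) (i : Fin (n + 1)) (ξ : ES n) :
    𝓕 (pdC n i f) ξ = (2 * π * Complex.I * (ξ i : ℝ)) * 𝓕 f ξ := by
  have h1 : Integrable (fderiv ℝ f) := hf.integrable_fderiv
  have h2 : 𝓕 (pdC n i f) ξ = 𝓕 (fderiv ℝ f) ξ (EuclideanSpace.single i (1 : ℝ)) :=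
    (Real.fourier_continuousLinearMap_apply h1).symm
  rw [h2, Real.fourier_fderiv hf.integrable (hf.1.differentiable (by simp)) h1]
  rw [VectorFourier.fourierSMulRight_apply]
  have : ((-innerSL ℝ) ξ) (EuclideanSpace.single i (1 : ℝ)) = -(ξ i) := by
    simp [EuclideanSpace.inner_single_right]
  rw [this]
  simp only [neg_smul, smul_neg, neg_neg, smul_eq_mul, Complex.real_smul]
  push_cast
  ring

theorem pdPow (hf : Nice n f) (i : Fin (n + 1)) (k : ℕ) : Nice n (pdPowC n i k f) := by
  induction k with
  | zero => exact hf
  | succ k ih => exact ih.pd i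

theorem ft_pdPow (hf : Nice n f) (i : Fin (n + 1)) (k : ℕ) (ξ : ES n) :
    𝓕 (pdPowC n i k f) ξ = (2 * π * Complex.I * (ξ i : ℝ)) ^ k * 𝓕 f ξ := by
  induction k with
  | zero => simp [pdPowC]
  | succ k ih =>
    have := (hf.pdPow i k).ft_pd i ξ
    rw [show pdPowC n i (k+1) f = pdC n i (pdPowC n i k f) from rfl, this, ih]
    ring

theorem foldr (α : Fin (n + 1) → ℕ) (l : List (Fin (n + 1))) (hf : Nice n f) :
    Nice n (List.foldr (fun i g => pdPowC n i (α i) g) f l) := by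
  induction l with
  | nil => exact hf
  | cons i l ih => exact ih.pdPow i (α i)

theorem ft_foldr (α : Fin (n + 1) → ℕ) (l : List (Fin (n + 1))) (hf : Nice n f) (ξ : ES n) :
    𝓕 (List.foldr (fun i g => pdPowC n i (α i) g) f l) ξ
      = (l.map (fun i => (2 * π * Complex.I * (ξ i : ℝ)) ^ (α i))).prod * 𝓕 f ξ := by
  induction l with
  | nil => simp
  | cons i l ih =>
    rw [List.foldr_cons, (hf.foldr α l).ft_pdPow i (α i) ξ, ih]
    simp; ring

theorem mDeriv (α : Fin (n + 1) → ℕ) (hf : Nice n f) : Nice n (mDerivC n α f) :=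
  hf.foldr α _

theorem ft_mDeriv (α : Fin (n + 1) → ℕ) (hf : Nice n f) (ξ : ES n) :
    𝓕 (mDerivC n α f) ξ
      = (∏ i, (2 * π * Complex.I * (ξ i : ℝ)) ^ (α i)) * 𝓕 f ξ := by
  rw [mDerivC, hf.ft_foldr α _ ξ, Fin.prod_univ_def]

theorem conj_comp (hf : Nice n f) : Nice n (fun x => (starRingEnd ℂ) (f x)) := by
  constructor
  · exact Complex.conjCLE.contDiff.comp hf.1
  · exact hf.2.comp_left (g := fun z => (starRingEnd ℂ) z) (map_zero _)

theorem ft_conj (hf : Nice n f) (ξ : ES n) :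
    (starRingEnd ℂ) (𝓕 f ξ) = 𝓕 (fun x => (starRingEnd ℂ) (f x)) (-ξ) := by
  rw [Real.fourier_eq', Real.fourier_eq', ← integral_conj]
  congr 1 with x
  rw [smul_eq_mul, smul_eq_mul, map_mul, ← Complex.exp_conj]
  congr 2
  rw [map_mul, Complex.conj_ofReal, Complex.conj_I, inner_neg_right]
  push_cast
  ring
theorem parseval (hf : Nice n f) (hg : Nice n g) :
    ∫ ξ, (starRingEnd ℂ) (𝓕 f ξ) * 𝓕 g ξ = ∫ x, (starRingEnd ℂ) (f x) * g x := by
  have hcf : Nice n (fun x => (starRingEnd ℂ) (f x)) := hf.conj_comp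
  have key : ∫ ξ, 𝓕 (fun x => (starRingEnd ℂ) (f x)) ξ * (𝓕⁻ g) ξ
      = ∫ x, (starRingEnd ℂ) (f x) * 𝓕 (𝓕⁻ g) x := by
    have hL : Continuous fun p : ES n × ES n => (innerₗ (ES n)) p.1 p.2 := continuous_inner
    have hflip : (innerₗ (ES n)).flip = innerₗ (ES n) := by
      apply LinearMap.ext; intro x; apply LinearMap.ext; intro y
      exact real_inner_comm x y
    have hinv : Integrable (𝓕⁻ g) := by
      have : (𝓕⁻ g) = fun w => 𝓕 g (-w) := by
        ext w; exact Real.fourierInv_eq_fourier_neg g w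
      rw [this]; exact hg.integrable_ft.comp_neg
    have := VectorFourier.integral_fourierIntegral_smul_eq_flip
      (e := Real.fourierChar) (L := innerₗ (ES n)) (μ := (volume : Measure (ES n)))
      (ν := (volume : Measure (ES n))) Real.continuous_fourierChar hL hcf.integrable hinv
    rw [hflip] at this
    simp [smul_eq_mul] at this
    exact this
  rw [hg.cont.fourier_fourierInv_eq hg.integrable hg.integrable_ft] at key
  rw [← key]
  have neg1 : ∫ ξ, (starRingEnd ℂ) (𝓕 f ξ) * 𝓕 g ξ
      = ∫ ξ, 𝓕 (fun x => (starRingEnd ℂ) (f x)) (-ξ) * 𝓕 g ξ := by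
    congr 1 with ξ; rw [hf.ft_conj ξ]
  rw [neg1]
  have := MeasureTheory.integral_neg_eq_self
    (fun ξ => 𝓕 (fun x => (starRingEnd ℂ) (f x)) ξ * 𝓕 g (-ξ)) (volume : Measure (ES n))
  simp only [neg_neg] at this
  rw [this]
  congr 1 with ξ
  rw [Real.fourierInv_eq_fourier_neg]

end Nice
end Nice

section MultinomAux
open Real Complex MeasureTheory
variable {n : ℕ}

theorem sum_of_mem_MIdx {m : ℕ} {α : Fin (n + 1) → ℕ} (h : α ∈ MIdx n m) : ∑ i, α i = m :=
  Finset.Nat.mem_antidiagonalTuple.mp h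

theorem MIdx_eq_piAntidiag (n m : ℕ) :
    MIdx n m = Finset.piAntidiag (Finset.univ : Finset (Fin (n + 1))) m := by
  ext α
  simp [MIdx, Finset.Nat.mem_antidiagonalTuple, Finset.mem_piAntidiag]

theorem multinom_sum (m : ℕ) (ξ : ES n) :
    ∑ α ∈ MIdx n m, ((Nat.factorial m : ℝ) / ∏ i, (Nat.factorial (α i) : ℝ))
        * (∏ i, ξ i ^ α i) ^ 2
      = ‖ξ‖ ^ (2 * m) := by
  have h1 : ‖ξ‖ ^ (2 * m) = (∑ i, ξ i ^ 2) ^ m := by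
    rw [pow_mul]
    congr 1
    rw [EuclideanSpace.norm_eq, Real.sq_sqrt (by positivity)]
    refine Finset.sum_congr rfl fun i _ => ?_
    rw [Real.norm_eq_abs, _root_.sq_abs]
  rw [h1, Finset.sum_pow_eq_sum_piAntidiag, ← MIdx_eq_piAntidiag]
  refine Finset.sum_congr rfl fun α hα => ?_
  have hsum := sum_of_mem_MIdx hα
  have hfacne : (∏ i, (Nat.factorial (α i) : ℝ)) ≠ 0 := by positivity
  have hcoef : ((Nat.multinomial Finset.univ α : ℝ))
      = (Nat.factorial m : ℝ) / ∏ i, (Nat.factorial (α i) : ℝ) := by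
    rw [eq_div_iff hfacne]
    have hspec := Nat.multinomial_spec Finset.univ α
    rw [hsum] at hspec
    have : (Nat.multinomial Finset.univ α : ℝ) * ∏ i, (Nat.factorial (α i) : ℝ)
        = ((∏ i, Nat.factorial (α i)) * Nat.multinomial Finset.univ α : ℕ) := by
      push_cast; ring
    rw [this, hspec]
  rw [hcoef]
  congr 1
  rw [← Finset.prod_pow]
  refine Finset.prod_congr rfl fun i _ => ?_
  rw [← pow_mul, ← pow_mul, mul_comm (α i) 2]

end MultinomAux

-- appended inside namespace Paper, section Main still open style
section Main2
open Real Complex SchwartzMap MeasureTheory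
open scoped FourierTransform RealInnerProductSpace

variable {n : ℕ}

theorem pointwise_garding {K m : ℕ} (lam c : ℝ) (hc : 0 ≤ c)
    (a : Fin K → Fin K → (Fin (n + 1) → ℕ) → (Fin (n + 1) → ℕ) → ℝ)
    (hLH : LegendreHadamard n K m a lam) (ξ : ES n) (z : Fin K → ℂ) :
    lam * ∑ j : Fin K, ∑ α ∈ MIdx n m,
        ((Nat.factorial m : ℝ) / ∏ i, (Nat.factorial (α i) : ℝ)) *
          (c * (∏ i, ξ i ^ α i) * (∏ i, ξ i ^ α i) * ((z j).re ^ 2 + (z j).im ^ 2))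
      ≤ ∑ j : Fin K, ∑ k : Fin K, ∑ α ∈ MIdx n m, ∑ β ∈ MIdx n m,
          a j k α β * (c * (∏ i, ξ i ^ α i) * (∏ i, ξ i ^ β i) *
            ((z j).re * (z k).re + (z j).im * (z k).im)) := by
  have hx := hLH ξ fun j => (z j).re
  have hy := hLH ξ fun j => (z j).im
  have e1 : (∑ j : Fin K, ∑ α ∈ MIdx n m,
        ((Nat.factorial m : ℝ) / ∏ i, (Nat.factorial (α i) : ℝ)) *
          (c * (∏ i, ξ i ^ α i) * (∏ i, ξ i ^ α i) * ((z j).re ^ 2 + (z j).im ^ 2)))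
      = c * (‖ξ‖ ^ (2 * m) *
          ((∑ j : Fin K, (z j).re ^ 2) + ∑ j : Fin K, (z j).im ^ 2)) := by
    calc (∑ j : Fin K, ∑ α ∈ MIdx n m,
        ((Nat.factorial m : ℝ) / ∏ i, (Nat.factorial (α i) : ℝ)) *
          (c * (∏ i, ξ i ^ α i) * (∏ i, ξ i ^ α i) * ((z j).re ^ 2 + (z j).im ^ 2)))
        = ∑ j : Fin K, (∑ α ∈ MIdx n m,
            ((Nat.factorial m : ℝ) / ∏ i, (Nat.factorial (α i) : ℝ)) * (∏ i, ξ i ^ α i) ^ 2)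
              * (c * ((z j).re ^ 2 + (z j).im ^ 2)) := by
          refine Finset.sum_congr rfl fun j _ => ?_
          rw [Finset.sum_mul]
          exact Finset.sum_congr rfl fun α _ => by ring
      _ = ∑ j : Fin K, ‖ξ‖ ^ (2 * m) * (c * ((z j).re ^ 2 + (z j).im ^ 2)) := by
          refine Finset.sum_congr rfl fun j _ => ?_
          rw [multinom_sum m ξ]
      _ = c * (‖ξ‖ ^ (2 * m) *
            ((∑ j : Fin K, (z j).re ^ 2) + ∑ j : Fin K, (z j).im ^ 2)) := by
          simp only [mul_add, Finset.mul_sum, ← Finset.sum_add_distrib]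
          exact Finset.sum_congr rfl fun j _ => by ring
  have e2 : (∑ j : Fin K, ∑ k : Fin K, ∑ α ∈ MIdx n m, ∑ β ∈ MIdx n m,
        a j k α β * (c * (∏ i, ξ i ^ α i) * (∏ i, ξ i ^ β i) *
          ((z j).re * (z k).re + (z j).im * (z k).im)))
      = c * ((∑ j : Fin K, ∑ k : Fin K, ∑ α ∈ MIdx n m, ∑ β ∈ MIdx n m,
            a j k α β * (∏ i, ξ i ^ α i) * (∏ i, ξ i ^ β i) * (z j).re * (z k).re)
          + ∑ j : Fin K, ∑ k : Fin K, ∑ α ∈ MIdx n m, ∑ β ∈ MIdx n m,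
            a j k α β * (∏ i, ξ i ^ α i) * (∏ i, ξ i ^ β i) * (z j).im * (z k).im) := by
    rw [mul_add, Finset.mul_sum, Finset.mul_sum, ← Finset.sum_add_distrib]
    refine Finset.sum_congr rfl fun j _ => ?_
    rw [Finset.mul_sum, Finset.mul_sum, ← Finset.sum_add_distrib]
    refine Finset.sum_congr rfl fun k _ => ?_
    rw [Finset.mul_sum, Finset.mul_sum, ← Finset.sum_add_distrib]
    refine Finset.sum_congr rfl fun α _ => ?_
    rw [Finset.mul_sum, Finset.mul_sum, ← Finset.sum_add_distrib]
    refine Finset.sum_congr rfl fun β _ => ?_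
    ring
  rw [e1, e2]
  have h1 := mul_le_mul_of_nonneg_left hx hc
  have h2 := mul_le_mul_of_nonneg_left hy hc
  nlinarith [h1, h2]

end Main2

section GardingProof
open Real Complex SchwartzMap MeasureTheory
open scoped FourierTransform RealInnerProductSpace

/-- Gårding inequality for constant-coefficient Legendre–Hadamard
systems. -/
theorem garding_inequality (n K m : ℕ) (hK : 1 ≤ K) (hm : 1 ≤ m) (lam : ℝ)
    (hlam : 0 < lam)
    (a : Fin K → Fin K → (Fin (n + 1) → ℕ) → (Fin (n + 1) → ℕ) → ℝ)
    (hsym : ∀ j k α β, a j k α β = a k j α β)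
    (hLH : LegendreHadamard n K m a lam) :
    ∀ φ : ES n → Fin K → ℂ, ContDiff ℝ (⊤ : ℕ∞) φ → HasCompactSupport φ →
      lam * ∑ j : Fin K, ∑ α ∈ MIdx n m,
          ((Nat.factorial m : ℝ) / ∏ i, (Nat.factorial (α i) : ℝ)) *
            ∫ X : ES n, ‖mDerivC n α (fun Y => φ Y j) X‖ ^ 2 ≤
        (∑ j : Fin K, ∑ k : Fin K, ∑ α ∈ MIdx n m, ∑ β ∈ MIdx n m,
            (a j k α β : ℂ) *
              ∫ X : ES n, (starRingEnd ℂ) (mDerivC n α (fun Y => φ Y j) X) *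
                mDerivC n β (fun Y => φ Y k) X).re := by
  intro φ hφs hφc
  classical
  have hcomp : ∀ j : Fin K, Nice n (fun Y => φ Y j) := fun j =>
    ⟨(contDiff_pi.mp hφs) j, hφc.comp_left (g := fun v : Fin K → ℂ => v j) rfl⟩
  set c : ℝ := (2 * π) ^ (2 * m) with hcdef
  have hc0 : (0 : ℝ) ≤ c := by positivity
  set F : Fin K → ES n → ℂ := fun j => 𝓕 (fun Y => φ Y j) with hF
  set h : Fin K → Fin K → (Fin (n + 1) → ℕ) → (Fin (n + 1) → ℕ) → ES n → ℂ :=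
    fun j k α β ξ => ((c * (∏ i, ξ i ^ α i) * (∏ i, ξ i ^ β i) : ℝ) : ℂ) *
      ((starRingEnd ℂ) (F j ξ) * F k ξ) with hh
  have conjProd : (starRingEnd ℂ) ((2 * (π : ℂ) * Complex.I) ^ m)
      * (2 * (π : ℂ) * Complex.I) ^ m = ((c : ℝ) : ℂ) := by
    rw [map_pow, ← mul_pow]
    have h2 : (starRingEnd ℂ) (2 * (π : ℂ) * Complex.I) * (2 * (π : ℂ) * Complex.I)
        = (((2 * π) ^ 2 : ℝ) : ℂ) := by
      simp only [map_mul, Complex.conj_I, Complex.conj_ofReal, map_ofNat]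
      push_cast
      linear_combination (-(4 : ℂ) * (π : ℂ) ^ 2) * Complex.I_mul_I
    rw [h2, hcdef]
    push_cast
    rw [← pow_mul]
  have ftD : ∀ (j : Fin K) (α : Fin (n + 1) → ℕ), α ∈ MIdx n m → ∀ ξ : ES n,
      𝓕 (mDerivC n α (fun Y => φ Y j)) ξ
        = (2 * (π : ℂ) * Complex.I) ^ m * (((∏ i, ξ i ^ α i : ℝ)) : ℂ) * F j ξ := by
    intro j α hα ξ
    rw [(hcomp j).ft_mDeriv α ξ, hF]
    congr 1
    calc ∏ i, (2 * (π : ℂ) * Complex.I * ((ξ i : ℝ) : ℂ)) ^ α i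
        = ∏ i, ((2 * (π : ℂ) * Complex.I) ^ α i * ((ξ i : ℝ) : ℂ) ^ α i) :=
          Finset.prod_congr rfl fun i _ => mul_pow _ _ _
      _ = (2 * (π : ℂ) * Complex.I) ^ (∑ i, α i) * ∏ i, ((ξ i : ℝ) : ℂ) ^ α i := by
          rw [Finset.prod_mul_distrib, Finset.prod_pow_eq_pow_sum]
      _ = _ := by
          rw [sum_of_mem_MIdx hα]
          congr 1
          push_cast
          rfl
  have hpt : ∀ (j k : Fin K) (α β : Fin (n + 1) → ℕ), α ∈ MIdx n m → β ∈ MIdx n m →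
      ∀ ξ : ES n,
      (starRingEnd ℂ) (𝓕 (mDerivC n α (fun Y => φ Y j)) ξ)
          * 𝓕 (mDerivC n β (fun Y => φ Y k)) ξ = h j k α β ξ := by
    intro j k α β hα hβ ξ
    rw [ftD j α hα ξ, ftD k β hβ ξ]
    simp only [hh, map_mul, Complex.conj_ofReal, Complex.ofReal_mul]
    linear_combination ((((∏ i, ξ i ^ α i : ℝ)) : ℂ) * (((∏ i, ξ i ^ β i : ℝ)) : ℂ)
      * (starRingEnd ℂ) (F j ξ) * F k ξ) * conjProd
  have hA : ∀ (j k : Fin K) (α β : Fin (n + 1) → ℕ), α ∈ MIdx n m → β ∈ MIdx n m →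
      (∫ X : ES n, (starRingEnd ℂ) (mDerivC n α (fun Y => φ Y j) X)
          * mDerivC n β (fun Y => φ Y k) X) = ∫ ξ : ES n, h j k α β ξ := by
    intro j k α β hα hβ
    rw [← Nice.parseval ((hcomp j).mDeriv α) ((hcomp k).mDeriv β)]
    exact integral_congr_ae (Filter.Eventually.of_forall (hpt j k α β hα hβ))
  have hInt : ∀ (j k : Fin K) (α β : Fin (n + 1) → ℕ), α ∈ MIdx n m → β ∈ MIdx n m →
      Integrable (h j k α β) := by
    intro j k α β hα hβ
    have he : h j k α β = fun ξ =>
        (starRingEnd ℂ) (𝓕 (mDerivC n α (fun Y => φ Y j)) ξ)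
          * 𝓕 (mDerivC n β (fun Y => φ Y k)) ξ :=
      funext fun ξ => (hpt j k α β hα hβ ξ).symm
    rw [he]
    obtain ⟨C, hC⟩ := ((hcomp j).mDeriv α).bounded_ft
    refine Integrable.bdd_mul ((hcomp k).mDeriv β).integrable_ft
      ((Complex.continuous_conj.comp ((hcomp j).mDeriv α).continuous_ft).aestronglyMeasurable)
      (c := C) (Filter.Eventually.of_forall fun ξ => ?_)
    simpa using hC ξ
  have hB : ∀ (j : Fin K) (α : Fin (n + 1) → ℕ), α ∈ MIdx n m →
      (∫ X : ES n, ‖mDerivC n α (fun Y => φ Y j) X‖ ^ 2)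
        = ∫ ξ : ES n, (h j j α α ξ).re := by
    intro j α hα
    have hD := (hcomp j).mDeriv α
    have hint1 : Integrable (fun X : ES n =>
        (starRingEnd ℂ) (mDerivC n α (fun Y => φ Y j) X) * mDerivC n α (fun Y => φ Y j) X) :=
      (hD.conj_comp.cont.mul hD.cont).integrable_of_hasCompactSupport hD.2.mul_left
    calc (∫ X : ES n, ‖mDerivC n α (fun Y => φ Y j) X‖ ^ 2)
        = ∫ X : ES n, ((starRingEnd ℂ) (mDerivC n α (fun Y => φ Y j) X)
            * mDerivC n α (fun Y => φ Y j) X).re := by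
          refine integral_congr_ae (Filter.Eventually.of_forall fun X => ?_)
          dsimp only
          rw [mul_comm, Complex.mul_conj, Complex.ofReal_re, Complex.normSq_eq_norm_sq]
      _ = (∫ X : ES n, (starRingEnd ℂ) (mDerivC n α (fun Y => φ Y j) X)
            * mDerivC n α (fun Y => φ Y j) X).re := by
          simpa using integral_re hint1
      _ = (∫ ξ : ES n, h j j α α ξ).re := by rw [hA j j α α hα hα]
      _ = ∫ ξ : ES n, (h j j α α ξ).re := by
          simpa using (integral_re (hInt j j α α hα hα)).symm
  have haInt : ∀ (j k : Fin K) (α β : Fin (n + 1) → ℕ), α ∈ MIdx n m → β ∈ MIdx n m →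
      Integrable (fun ξ : ES n => (a j k α β : ℂ) * h j k α β ξ) :=
    fun j k α β hα hβ => (hInt j k α β hα hβ).const_mul _
  have hInt3 : ∀ (j k : Fin K) (α : Fin (n + 1) → ℕ), α ∈ MIdx n m →
      Integrable (fun ξ : ES n => ∑ β ∈ MIdx n m, (a j k α β : ℂ) * h j k α β ξ) :=
    fun j k α hα => integrable_finset_sum _ fun β hβ => haInt j k α β hα hβ
  have hInt2 : ∀ j k : Fin K, Integrable (fun ξ : ES n =>
      ∑ α ∈ MIdx n m, ∑ β ∈ MIdx n m, (a j k α β : ℂ) * h j k α β ξ) :=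
    fun j k => integrable_finset_sum _ fun α hα => hInt3 j k α hα
  have hInt1 : ∀ j : Fin K, Integrable (fun ξ : ES n =>
      ∑ k : Fin K, ∑ α ∈ MIdx n m, ∑ β ∈ MIdx n m, (a j k α β : ℂ) * h j k α β ξ) :=
    fun j => integrable_finset_sum _ fun k _ => hInt2 j k
  have hInt0 : Integrable (fun ξ : ES n => ∑ j : Fin K, ∑ k : Fin K, ∑ α ∈ MIdx n m,
      ∑ β ∈ MIdx n m, (a j k α β : ℂ) * h j k α β ξ) :=
    integrable_finset_sum _ fun j _ => hInt1 j
  have hR : (∑ j : Fin K, ∑ k : Fin K, ∑ α ∈ MIdx n m, ∑ β ∈ MIdx n m,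
        (a j k α β : ℂ) * ∫ X : ES n, (starRingEnd ℂ) (mDerivC n α (fun Y => φ Y j) X)
          * mDerivC n β (fun Y => φ Y k) X)
      = ∫ ξ : ES n, ∑ j : Fin K, ∑ k : Fin K, ∑ α ∈ MIdx n m, ∑ β ∈ MIdx n m,
          (a j k α β : ℂ) * h j k α β ξ := by
    calc (∑ j : Fin K, ∑ k : Fin K, ∑ α ∈ MIdx n m, ∑ β ∈ MIdx n m,
        (a j k α β : ℂ) * ∫ X : ES n, (starRingEnd ℂ) (mDerivC n α (fun Y => φ Y j) X)
          * mDerivC n β (fun Y => φ Y k) X)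
        = ∑ j : Fin K, ∑ k : Fin K, ∑ α ∈ MIdx n m, ∑ β ∈ MIdx n m,
            ∫ ξ : ES n, (a j k α β : ℂ) * h j k α β ξ := by
          refine Finset.sum_congr rfl fun j _ => Finset.sum_congr rfl fun k _ =>
            Finset.sum_congr rfl fun α hα => Finset.sum_congr rfl fun β hβ => ?_
          rw [hA j k α β hα hβ, ← integral_const_mul]
      _ = ∑ j : Fin K, ∑ k : Fin K, ∑ α ∈ MIdx n m,
            ∫ ξ : ES n, ∑ β ∈ MIdx n m, (a j k α β : ℂ) * h j k α β ξ := by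
          refine Finset.sum_congr rfl fun j _ => Finset.sum_congr rfl fun k _ =>
            Finset.sum_congr rfl fun α hα => ?_
          exact (integral_finset_sum _ fun β hβ => haInt j k α β hα hβ).symm
      _ = ∑ j : Fin K, ∑ k : Fin K,
            ∫ ξ : ES n, ∑ α ∈ MIdx n m, ∑ β ∈ MIdx n m, (a j k α β : ℂ) * h j k α β ξ := by
          refine Finset.sum_congr rfl fun j _ => Finset.sum_congr rfl fun k _ => ?_
          exact (integral_finset_sum _ fun α hα => hInt3 j k α hα).symm
      _ = ∑ j : Fin K, ∫ ξ : ES n, ∑ k : Fin K, ∑ α ∈ MIdx n m, ∑ β ∈ MIdx n m,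
            (a j k α β : ℂ) * h j k α β ξ := by
          refine Finset.sum_congr rfl fun j _ => ?_
          exact (integral_finset_sum _ fun k _ => hInt2 j k).symm
      _ = ∫ ξ : ES n, ∑ j : Fin K, ∑ k : Fin K, ∑ α ∈ MIdx n m, ∑ β ∈ MIdx n m,
            (a j k α β : ℂ) * h j k α β ξ :=
          (integral_finset_sum _ fun j _ => hInt1 j).symm
  have hIntRe : ∀ (j : Fin K) (α : Fin (n + 1) → ℕ), α ∈ MIdx n m →
      Integrable (fun ξ : ES n => ((Nat.factorial m : ℝ) / ∏ i, (Nat.factorial (α i) : ℝ))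
        * (h j j α α ξ).re) := by
    intro j α hα
    have : Integrable (fun ξ : ES n => (h j j α α ξ).re) := by
      simpa using (hInt j j α α hα hα).re
    exact this.const_mul _
  have hIntReS : ∀ j : Fin K, Integrable (fun ξ : ES n => ∑ α ∈ MIdx n m,
      ((Nat.factorial m : ℝ) / ∏ i, (Nat.factorial (α i) : ℝ)) * (h j j α α ξ).re) :=
    fun j => integrable_finset_sum _ fun α hα => hIntRe j α hα
  have hIntReT : Integrable (fun ξ : ES n => ∑ j : Fin K, ∑ α ∈ MIdx n m,
      ((Nat.factorial m : ℝ) / ∏ i, (Nat.factorial (α i) : ℝ)) * (h j j α α ξ).re) :=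
    integrable_finset_sum _ fun j _ => hIntReS j
  have hL : (∑ j : Fin K, ∑ α ∈ MIdx n m,
        ((Nat.factorial m : ℝ) / ∏ i, (Nat.factorial (α i) : ℝ)) *
          ∫ X : ES n, ‖mDerivC n α (fun Y => φ Y j) X‖ ^ 2)
      = ∫ ξ : ES n, ∑ j : Fin K, ∑ α ∈ MIdx n m,
          ((Nat.factorial m : ℝ) / ∏ i, (Nat.factorial (α i) : ℝ)) * (h j j α α ξ).re := by
    calc (∑ j : Fin K, ∑ α ∈ MIdx n m,
        ((Nat.factorial m : ℝ) / ∏ i, (Nat.factorial (α i) : ℝ)) *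
          ∫ X : ES n, ‖mDerivC n α (fun Y => φ Y j) X‖ ^ 2)
        = ∑ j : Fin K, ∑ α ∈ MIdx n m, ∫ ξ : ES n,
            ((Nat.factorial m : ℝ) / ∏ i, (Nat.factorial (α i) : ℝ)) * (h j j α α ξ).re := by
          refine Finset.sum_congr rfl fun j _ => Finset.sum_congr rfl fun α hα => ?_
          rw [hB j α hα, ← integral_const_mul]
      _ = ∑ j : Fin K, ∫ ξ : ES n, ∑ α ∈ MIdx n m,
            ((Nat.factorial m : ℝ) / ∏ i, (Nat.factorial (α i) : ℝ)) * (h j j α α ξ).re := by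
          refine Finset.sum_congr rfl fun j _ => ?_
          exact (integral_finset_sum _ fun α hα => hIntRe j α hα).symm
      _ = ∫ ξ : ES n, ∑ j : Fin K, ∑ α ∈ MIdx n m,
            ((Nat.factorial m : ℝ) / ∏ i, (Nat.factorial (α i) : ℝ)) * (h j j α α ξ).re :=
          (integral_finset_sum _ fun j _ => hIntReS j).symm
  have hR2 : (∫ ξ : ES n, ∑ j : Fin K, ∑ k : Fin K, ∑ α ∈ MIdx n m, ∑ β ∈ MIdx n m,
        (a j k α β : ℂ) * h j k α β ξ).re
      = ∫ ξ : ES n, (∑ j : Fin K, ∑ k : Fin K, ∑ α ∈ MIdx n m, ∑ β ∈ MIdx n m,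
        (a j k α β : ℂ) * h j k α β ξ).re := by
    simpa using (integral_re hInt0).symm
  rw [hL, hR, hR2, ← integral_const_mul]
  have hgInt : Integrable (fun ξ : ES n => (∑ j : Fin K, ∑ k : Fin K, ∑ α ∈ MIdx n m,
      ∑ β ∈ MIdx n m, (a j k α β : ℂ) * h j k α β ξ).re) := by
    simpa using hInt0.re
  refine integral_mono (hIntReT.const_mul lam) hgInt fun ξ => ?_
  have hre : ∀ (q r : Fin K) (α β : Fin (n + 1) → ℕ),
      ((a q r α β : ℂ) * h q r α β ξ).re
        = a q r α β * (c * (∏ i, ξ i ^ α i) * (∏ i, ξ i ^ β i) *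
            ((F q ξ).re * (F r ξ).re + (F q ξ).im * (F r ξ).im)) := by
    intro q r α β
    simp only [hh]
    have e : (a q r α β : ℂ) * (((c * (∏ i, ξ i ^ α i) * (∏ i, ξ i ^ β i) : ℝ) : ℂ) *
        ((starRingEnd ℂ) (F q ξ) * F r ξ))
        = (((a q r α β * (c * (∏ i, ξ i ^ α i) * (∏ i, ξ i ^ β i)) : ℝ)) : ℂ) *
            ((starRingEnd ℂ) (F q ξ) * F r ξ) := by
      push_cast; ring
    rw [e, Complex.re_ofReal_mul]
    simp only [Complex.mul_re, Complex.conj_re, Complex.conj_im]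
    ring
  have hre2 : ∀ (q : Fin K) (α : Fin (n + 1) → ℕ), (h q q α α ξ).re
      = c * (∏ i, ξ i ^ α i) * (∏ i, ξ i ^ α i) * ((F q ξ).re ^ 2 + (F q ξ).im ^ 2) := by
    intro q α
    simp only [hh, Complex.re_ofReal_mul]
    simp only [Complex.mul_re, Complex.conj_re, Complex.conj_im]
    ring
  simp only [Complex.re_sum, hre, hre2]
  exact pointwise_garding lam c hc0 a hLH ξ fun j => F j ξ


end GardingProof

end Paper
end
end

section
/- Control of the interior Whitney-ball Carleson quantity by Carleson norms on Lipschitz subdomains: there is M_n ≥ 1, depending only on n, such that for every n-dimensional ADR set E ⊆ ℝ^{n+1} and every locally square-integrable function F on ℝ^{n+1}∖E, one has ‖F‖_{CME₀(ℝ^{n+1}∖E)} ≤ 2^{n+1} · sup{ ‖F‖_{CME(D)} : D ⊆ ℝ^{n+1}∖E is a bounded Lipschitz domain with Lipschitz character at most M_n }, where ‖F‖_{CME₀(ℝ^{n+1}∖E)} := sup over X ∉ E of dist(X,E)^{1−n} ∫_{B(X, dist(X,E)/2)} |F(Y)|² dY, as an inequality in [0,∞]. -/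
open MeasureTheory Metric Set
open scoped ENNReal NNReal

noncomputable section

namespace Paper

variable {n : ℕ}

variable {n : ℕ}

section Aux

variable {n : ℕ}

/-- The last basis vector. -/
def eL (n : ℕ) : ES n := EuclideanSpace.single (Fin.last n) (1:ℝ)

lemma initCoords_smul_eL (c : ℝ) : initCoords (c • eL n) = 0 := by
  ext i
  simp [initCoords, eL, PiLp.smul_apply, EuclideanSpace.single_apply,
    (Fin.castSucc_lt_last i).ne]

lemma lastCoord_smul_eL (c : ℝ) : lastCoord (c • eL n) = c := by
  simp [lastCoord, eL, PiLp.smul_apply, EuclideanSpace.single_apply]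

lemma dist_sq_split (y z : ES n) :
    dist y z ^ 2 = ‖initCoords y - initCoords z‖ ^ 2 + (lastCoord y - lastCoord z) ^ 2 := by
  have h1 : dist y z ^ 2 = ∑ i, dist (y i) (z i) ^ 2 := by
    rw [EuclideanSpace.dist_eq, Real.sq_sqrt]
    positivity
  have h2 : ‖initCoords y - initCoords z‖ ^ 2
      = ∑ i : Fin n, dist (y i.castSucc) (z i.castSucc) ^ 2 := by
    rw [EuclideanSpace.norm_eq, Real.sq_sqrt (by positivity)]
    refine Finset.sum_congr rfl fun i _ => ?_
    simp [initCoords, Real.dist_eq, sq_abs, Real.norm_eq_abs]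
  rw [h1, Fin.sum_univ_castSucc, h2]
  simp [lastCoord, Real.dist_eq, sq_abs]

lemma exists_linIso' (u v : ES n) (hu : ‖u‖ = 1) (hv : ‖v‖ = 1) :
    ∃ L : ES n ≃ₗᵢ[ℝ] ES n, L v = u := by
  by_cases h : v = u
  · exact ⟨LinearIsometryEquiv.refl ℝ (ES n), by simp [h]⟩
  · exact ⟨Submodule.reflection (ℝ ∙ (v - u))ᗮ, Submodule.reflection_sub (by rw [hu, hv])⟩

lemma sphere_cover (n : ℕ) :
    ∃ (m : ℕ) (p : Fin m → ES n), 1 ≤ m ∧ (∀ i, ‖p i‖ = 1) ∧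
      sphere (0 : ES n) 1 ⊆ ⋃ i, ball (p i) (1/8) := by
  have hcomp : IsCompact (sphere (0 : ES n) 1) := isCompact_sphere 0 1
  have hne : (sphere (0 : ES n) 1).Nonempty := NormedSpace.sphere_nonempty.2 (by norm_num)
  obtain ⟨t, ht⟩ := hcomp.elim_finite_subcover
    (fun z : sphere (0 : ES n) 1 => ball (z : ES n) (1/8))
    (fun _ => isOpen_ball)
    (fun z hz => mem_iUnion.2 ⟨⟨z, hz⟩, mem_ball_self (by norm_num)⟩)
  have htne : t.Nonempty := by
    rcases hne with ⟨z, hz⟩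
    rcases mem_iUnion₂.1 (ht hz) with ⟨i, hi, _⟩
    exact ⟨i, hi⟩
  refine ⟨t.card, fun i => ((t.equivFin.symm i : sphere (0 : ES n) 1) : ES n),
    Finset.card_pos.2 htne, fun i => by simpa using (t.equivFin.symm i).1.2, ?_⟩
  intro z hz
  rcases mem_iUnion₂.1 (ht hz) with ⟨i, hi, hzi⟩
  exact mem_iUnion.2 ⟨t.equivFin ⟨i, hi⟩, by simpa using hzi⟩

lemma sqrt_lip {d a b : ℝ} (hd : 0 < d) (ha0 : 0 ≤ a) (hab : a ≤ b) (hb : b ≤ d/4) :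
    Real.sqrt (d^2 - b^2) ≤ Real.sqrt (d^2 - a^2) ∧
      Real.sqrt (d^2 - a^2) - Real.sqrt (d^2 - b^2) ≤ b - a := by
  have hb0 : 0 ≤ b := ha0.trans hab
  have hbd : b ≤ d := hb.trans (by linarith)
  have h1 : (0:ℝ) ≤ d^2 - b^2 := by nlinarith
  have h2 : (0:ℝ) ≤ d^2 - a^2 := by nlinarith
  set A := Real.sqrt (d^2 - a^2) with hA
  set B := Real.sqrt (d^2 - b^2) with hB
  have hA2 : A^2 = d^2 - a^2 := Real.sq_sqrt h2
  have hB2 : B^2 = d^2 - b^2 := Real.sq_sqrt h1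
  have hA0 : 0 ≤ A := Real.sqrt_nonneg _
  have hB0 : 0 ≤ B := Real.sqrt_nonneg _
  have hBA : B ≤ A := Real.sqrt_le_sqrt (by nlinarith)
  refine ⟨hBA, ?_⟩
  have hBge : d/2 ≤ B := by
    have : (d/2)^2 ≤ d^2 - b^2 := by nlinarith
    calc d/2 = Real.sqrt ((d/2)^2) := (Real.sqrt_sq (by linarith)).symm
    _ ≤ B := Real.sqrt_le_sqrt this
  have hAB : d ≤ A + B := by linarith
  nlinarith [mul_le_mul_of_nonneg_left hAB (sub_nonneg.2 hBA)]

lemma psi_aux {d : ℝ} (hd : 0 < d) (a b : ℝ) (ha0 : 0 ≤ a) (ha4 : a ≤ d/4)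
    (hb0 : 0 ≤ b) (hb4 : b ≤ d/4) :
    |(d - Real.sqrt (d^2 - a^2)) - (d - Real.sqrt (d^2 - b^2))| ≤ |a - b| := by
  have : (d - Real.sqrt (d^2 - a^2)) - (d - Real.sqrt (d^2 - b^2))
      = Real.sqrt (d^2 - b^2) - Real.sqrt (d^2 - a^2) := by ring
  rw [this]
  rcases le_total a b with h | h
  · obtain ⟨h1, h2⟩ := sqrt_lip hd ha0 h hb4
    rw [abs_of_nonpos (by linarith), abs_of_nonpos (by linarith)]
    linarith
  · obtain ⟨h1, h2⟩ := sqrt_lip hd hb0 h ha4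
    rw [abs_of_nonneg (by linarith), abs_of_nonneg (by linarith)]
    linarith

/-- The boundary graph function for a ball of radius `d`. -/
def psi (n : ℕ) (d : ℝ) : EuclideanSpace ℝ (Fin n) → ℝ :=
  fun y' => d - Real.sqrt (d^2 - (min ‖y'‖ (d/4))^2)

lemma psi_lip (n : ℕ) {d : ℝ} (hd : 0 < d) : LipschitzWith 1 (psi n d) := by
  have hg : LipschitzWith 1 (fun y' : EuclideanSpace ℝ (Fin n) => min ‖y'‖ (d/4)) := by
    simpa using (lipschitzWith_one_norm (E := EuclideanSpace ℝ (Fin n))).min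
      (LipschitzWith.const (d/4))
  refine LipschitzWith.of_dist_le_mul fun y z => ?_
  have hab : |min ‖y‖ (d/4) - min ‖z‖ (d/4)| ≤ dist y z := by
    simpa [Real.dist_eq] using hg.dist_le_mul y z
  rw [Real.dist_eq, NNReal.coe_one, one_mul]
  refine le_trans ?_ hab
  exact psi_aux hd _ _ (le_min (norm_nonneg _) (by linarith)) (min_le_right _ _)
    (le_min (norm_nonneg _) (by linarith)) (min_le_right _ _)

lemma initCoords_zero : initCoords (0 : ES n) = 0 := by
  ext i; simp [initCoords]

lemma lastCoord_zero : lastCoord (0 : ES n) = 0 := rfl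

lemma psi_zero {d : ℝ} (hd : 0 < d) : psi n d 0 = 0 := by
  simp [psi, min_eq_left (by linarith : (0:ℝ) ≤ d/4), Real.sqrt_sq hd.le]

lemma graph_iff {d : ℝ} (hd : 0 < d) (y : ES n) (h1 : ‖initCoords y‖ < d/4)
    (h2 : |lastCoord y| < d) :
    (y ∈ ball (d • eL n) d ↔ y ∈ upperGraph (psi n d)) := by
  have hds : dist y (d • eL n) ^ 2 = ‖initCoords y‖^2 + (lastCoord y - d)^2 := by
    rw [dist_sq_split, initCoords_smul_eL, lastCoord_smul_eL, sub_zero]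
  set s := ‖initCoords y‖ with hs
  set t := lastCoord y with ht
  have hs0 : 0 ≤ s := norm_nonneg _
  have htd : t < d := (abs_lt.1 h2).2
  have hR2 : Real.sqrt (d^2 - s^2) ^ 2 = d^2 - s^2 := Real.sq_sqrt (by nlinarith)
  have hR0 : 0 ≤ Real.sqrt (d^2 - s^2) := Real.sqrt_nonneg _
  set R := Real.sqrt (d^2 - s^2) with hR
  have hmem : y ∈ upperGraph (psi n d) ↔ d - R < t := by
    show psi n d (initCoords y) < t ↔ _
    rw [show psi n d (initCoords y) = d - Real.sqrt (d^2 - (min s (d/4))^2) from rfl,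
      min_eq_left h1.le]
  have hballiff : y ∈ ball (d • eL n) d ↔ s^2 + (t - d)^2 < d^2 := by
    rw [mem_ball, dist_comm, ← hds, dist_comm]
    exact (pow_lt_pow_iff_left₀ dist_nonneg hd.le two_ne_zero).symm
  rw [hballiff, hmem]
  constructor
  · intro h3
    by_contra h4
    push_neg at h4
    nlinarith [mul_nonneg (by linarith : (0:ℝ) ≤ d - t - R) (by linarith : (0:ℝ) ≤ d - t + R)]
  · intro h3
    nlinarith [mul_self_lt_mul_self (by linarith : (0:ℝ) ≤ d - t) (by linarith : d - t < R)]

lemma chart (X : ES n) {d : ℝ} (hd : 0 < d) (u : ES n) (hu : ‖u‖ = 1) :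
    ∃ (e : ES n ≃ᵃⁱ[ℝ] ES n) (ψ : EuclideanSpace ℝ (Fin n) → ℝ),
      LipschitzWith (1:ℝ).toNNReal ψ ∧ (X + d • u) ∈ frontier (e '' upperGraph ψ) ∧
        graphCylinder e (X + d • u) (2 * (d/8)) (8 * ((1:ℝ) + 1) * (d/8)) ∩ ball X d =
          graphCylinder e (X + d • u) (2 * (d/8)) (8 * ((1:ℝ) + 1) * (d/8))
            ∩ (e '' upperGraph ψ) := by
  obtain ⟨L, hL⟩ := exists_linIso' (-u) (eL n) (by simpa using hu) (by simp [eL])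
  set xj := X + d • u with hxj
  set e := (L.toAffineIsometryEquiv).trans (AffineIsometryEquiv.constVAdd ℝ (ES n) xj)
    with hedef
  have he : ∀ y, e y = xj + L y := by
    intro y
    simp [hedef, vadd_eq_add]
  have he0 : e 0 = xj := by simp [he]
  have heD : e (d • eL n) = X := by
    rw [he, _root_.map_smul, hL, hxj, smul_neg]
    abel
  have hsymmxj : e.symm xj = 0 := by rw [← he0, AffineIsometryEquiv.symm_apply_apply]
  have hball : ball X d = e '' ball (d • eL n) d := by
    have := e.toIsometryEquiv.image_ball (d • eL n) d
    rw [AffineIsometryEquiv.coe_toIsometryEquiv] at this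
    rw [← heD, ← this]
  refine ⟨e, psi n d, by simpa using psi_lip n hd, ?_, ?_⟩
  · have h0 : (0 : ES n) ∈ frontier (upperGraph (psi n d)) := by
      rw [frontier_eq_closure_inter_closure]
      constructor
      · rw [Metric.mem_closure_iff]
        intro ε hε
        refine ⟨(ε/2) • eL n, ?_, ?_⟩
        · show psi n d (initCoords _) < lastCoord _
          rw [initCoords_smul_eL, lastCoord_smul_eL, psi_zero hd]
          linarith
        · rw [dist_zero_left]
          simp [eL, norm_smul, abs_of_pos hε]
          linarith
      · rw [Metric.mem_closure_iff]
        intro ε hε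
        refine ⟨(-(ε/2)) • eL n, ?_, ?_⟩
        · show ¬ psi n d (initCoords _) < lastCoord _
          rw [initCoords_smul_eL, lastCoord_smul_eL, psi_zero hd]
          linarith
        · rw [dist_zero_left]
          simp [eL, norm_smul, abs_of_pos hε]
          linarith
    have himg : e '' frontier (upperGraph (psi n d)) = frontier (e '' upperGraph (psi n d)) := by
      have := e.toHomeomorph.image_frontier (upperGraph (psi n d))
      rwa [AffineIsometryEquiv.coe_toHomeomorph] at this
    rw [← himg]
    exact ⟨0, h0, he0⟩
  · have hset : {y : ES n | dist (initCoords y) (0 : EuclideanSpace ℝ (Fin n)) < 2*(d/8) ∧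
        |lastCoord y - 0| < 8*((1:ℝ)+1)*(d/8)/2}
        = {y : ES n | ‖initCoords y‖ < d/4 ∧ |lastCoord y| < d} := by
      ext y
      simp only [mem_setOf_eq, dist_zero_right, sub_zero]
      constructor <;> rintro ⟨h1, h2⟩ <;> exact ⟨by linarith, by linarith⟩
    have hcyl : graphCylinder e xj (2 * (d/8)) (8 * ((1:ℝ) + 1) * (d/8))
        = e '' {y : ES n | ‖initCoords y‖ < d/4 ∧ |lastCoord y| < d} := by
      unfold graphCylinder
      rw [hsymmxj, initCoords_zero, lastCoord_zero, hset]
    have hkey : {y : ES n | ‖initCoords y‖ < d/4 ∧ |lastCoord y| < d} ∩ ball (d • eL n) d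
        = {y : ES n | ‖initCoords y‖ < d/4 ∧ |lastCoord y| < d} ∩ upperGraph (psi n d) := by
      ext y
      simp only [mem_inter_iff, mem_setOf_eq]
      constructor <;> rintro ⟨⟨h1, h2⟩, h3⟩ <;>
        exact ⟨⟨h1, h2⟩, by rw [← graph_iff hd y h1 h2] at * <;> assumption⟩
    rw [hcyl, hball, ← Set.image_inter e.injective, ← Set.image_inter e.injective, hkey]

lemma ball_lip (m : ℕ) (p : Fin m → ES n) (hm : 1 ≤ m) (hp : ∀ i, ‖p i‖ = 1)
    (hcover : sphere (0:ES n) 1 ⊆ ⋃ i, ball (p i) (1/8))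
    (X : ES n) {d : ℝ} (hd : 0 < d) :
    IsBddLipDomain n (ball X d) 1 m 2 := by
  have hfr : frontier (ball X d) = sphere X d := frontier_ball X hd.ne'
  refine ⟨isOpen_ball, (convex_ball X d).isConnected (nonempty_ball.2 hd),
    isBounded_ball, le_refl _, hm, one_le_two, d/8, by linarith,
    fun j => X + d • p j, fun _ => d/8, ?_, ?_, ?_, ?_⟩
  · intro j
    rw [hfr, mem_sphere_iff_norm]
    simp [norm_smul, abs_of_pos hd, hp j]
  · intro j
    exact ⟨by show (2:ℝ)⁻¹ * (d/8) < d/8; linarith,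
      by show (d:ℝ)/8 < 2 * (d/8); linarith⟩
  · rw [hfr]
    intro z hz
    have hzX : ‖z - X‖ = d := by rw [← dist_eq_norm]; exact mem_sphere.1 hz
    set w := d⁻¹ • (z - X) with hw
    have hwn : ‖w‖ = 1 := by
      rw [hw, norm_smul, hzX, Real.norm_eq_abs, abs_of_pos (inv_pos.2 hd)]
      field_simp
    have hwz : d • w = z - X := by
      rw [hw, smul_inv_smul₀ hd.ne']
    rcases mem_iUnion.1 (hcover (mem_sphere_zero_iff_norm.2 hwn)) with ⟨i, hi⟩
    refine mem_iUnion.2 ⟨i, ?_⟩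
    rw [mem_ball, dist_eq_norm]
    have : z - (X + d • p i) = d • (w - p i) := by
      rw [smul_sub, hwz]
      abel
    rw [this, norm_smul, Real.norm_eq_abs, abs_of_pos hd]
    have hdist : ‖w - p i‖ < 1/8 := by rwa [mem_ball, dist_eq_norm] at hi
    show d * ‖w - p i‖ < d/8
    calc d * ‖w - p i‖ < d * (1/8) := by
          exact mul_lt_mul_of_pos_left hdist hd
    _ = d/8 := by ring
  · intro j
    exact chart X hd (p j) (hp j)

end Aux

/-- Control of the interior Whitney-ball Carleson quantity `CME₀`
by Carleson norms on Lipschitz subdomains. -/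
theorem CME0_le_sup_CME_Lipschitz (n : ℕ) (hn : 1 ≤ n) :
    ∃ Mn : ℝ, 1 ≤ Mn ∧
      ∀ (E : Set (ES n)) (C₁ : ℝ) (F : ES n → ℝ), ADR n E C₁ → LocL2 n Eᶜ F →
        (⨆ (X : ES n) (_ : X ∉ E),
            ENNReal.ofReal (Metric.infDist X E ^ ((1 : ℤ) - n)) *
              ∫⁻ Y in ball X (Metric.infDist X E / 2), ENNReal.ofReal (F Y ^ 2)) ≤
          2 ^ (n + 1) *
            ⨆ (D : Set (ES n)) (_ : D ⊆ Eᶜ) (_ : LipCharLe n D Mn), CME n D F := by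
  obtain ⟨m, p, hm, hp, hcover⟩ := sphere_cover n
  refine ⟨max 2 (m : ℝ), le_trans one_le_two (le_max_left _ _), ?_⟩
  intro E C₁ F hADR _
  obtain ⟨hEne, hEcl, -, -⟩ := hADR
  refine iSup₂_le fun X hX => ?_
  set d := Metric.infDist X E with hdd
  have hd : 0 < d := (hEcl.notMem_iff_infDist_pos hEne).1 hX
  set D := ball X d with hD
  have hDsub : D ⊆ Eᶜ := by
    intro y hy hyE
    have h1 : d ≤ dist X y := Metric.infDist_le_dist_of_mem hyE
    have h2 : dist y X < d := mem_ball.1 hy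
    rw [dist_comm] at h2
    exact absurd h1 (not_le.2 h2)
  have hLip : LipCharLe n D (max 2 (m : ℝ)) :=
    ⟨1, m, 2, ball_lip m p hm hp hcover X hd,
      le_trans one_le_two (le_max_left _ _), le_max_right _ _, le_max_left _ _⟩
  have hfr : frontier D = sphere X d := frontier_ball X hd.ne'
  set x₀ := X + d • p ⟨0, hm⟩ with hx₀
  have hx₀fr : x₀ ∈ frontier D := by
    rw [hfr, mem_sphere_iff_norm]
    simp [hx₀, norm_smul, abs_of_pos hd, hp]
  have hsubset : ball X (d/2) ⊆ ball x₀ (3*d/2) ∩ D := by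
    intro Y hY
    have h1 : dist Y X < d/2 := mem_ball.1 hY
    have h2 : dist X x₀ = d := by
      rw [hx₀, dist_eq_norm]
      simp [norm_smul, abs_of_pos hd, hp]
    constructor
    · rw [mem_ball]
      calc dist Y x₀ ≤ dist Y X + dist X x₀ := dist_triangle _ _ _
      _ < d/2 + d := by linarith [h2 ▸ le_refl (dist X x₀)]
      _ = 3*d/2 := by ring
    · exact mem_ball.2 (by linarith)
  have hinf : ∀ Y ∈ ball X (d/2), d/2 ≤ Metric.infDist Y (frontier D) := by
    intro Y hY
    by_contra hcon
    push_neg at hcon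
    have hne : (frontier D).Nonempty := ⟨x₀, hx₀fr⟩
    obtain ⟨z, hz, hdz⟩ := (Metric.infDist_lt_iff hne).1 hcon
    rw [hfr] at hz
    have hz' : dist X z = d := by rw [dist_comm]; exact mem_sphere.1 hz
    have h1 : dist Y X < d/2 := mem_ball.1 hY
    have htri : dist X z ≤ dist X Y + dist Y z := dist_triangle _ _ _
    rw [dist_comm X Y] at htri
    linarith
  set I := ∫⁻ Y in ball X (d/2), ENNReal.ofReal (F Y ^ 2) with hI
  set A := ∫⁻ Y in ball x₀ (3*d/2) ∩ D,
      ENNReal.ofReal (F Y ^ 2 * Metric.infDist Y (frontier D)) with hA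
  have step1 : ENNReal.ofReal (d/2) * I ≤ A := by
    have e1 : ENNReal.ofReal (d/2) * I
        = ∫⁻ Y in ball X (d/2), ENNReal.ofReal (d/2) * ENNReal.ofReal (F Y ^ 2) :=
      (lintegral_const_mul' _ _ ENNReal.ofReal_ne_top).symm
    rw [e1]
    refine le_trans (setLIntegral_mono' measurableSet_ball fun Y hY => ?_)
      (lintegral_mono_set hsubset)
    rw [← ENNReal.ofReal_mul (by positivity : (0:ℝ) ≤ d/2)]
    refine ENNReal.ofReal_le_ofReal ?_
    calc d/2 * F Y ^ 2 = F Y ^ 2 * (d/2) := by ring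
    _ ≤ F Y ^ 2 * Metric.infDist Y (frontier D) :=
      mul_le_mul_of_nonneg_left (hinf Y hY) (sq_nonneg _)
  have step2 : (ENNReal.ofReal ((3*d/2) ^ n))⁻¹ * A ≤ CME n D F := by
    unfold CME
    exact le_iSup_of_le x₀ (le_iSup_of_le hx₀fr (le_iSup_of_le (3*d/2)
      (le_iSup_of_le (by linarith) le_rfl)))
  have step3 : CME n D F ≤
      ⨆ (D' : Set (ES n)) (_ : D' ⊆ Eᶜ) (_ : LipCharLe n D' (max 2 (m:ℝ))), CME n D' F :=
    le_iSup_of_le D (le_iSup_of_le hDsub (le_iSup_of_le hLip le_rfl))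
  set c := ENNReal.ofReal ((3*d/2) ^ n) with hc
  have hc0 : c ≠ 0 := by
    rw [hc]
    simp only [ne_eq, ENNReal.ofReal_eq_zero, not_le]
    positivity
  have hctop : c ≠ ⊤ := ENNReal.ofReal_ne_top
  have hc1 : c * c⁻¹ = 1 := ENNReal.mul_inv_cancel hc0 hctop
  have key : ENNReal.ofReal (d ^ ((1:ℤ) - n)) * c ≤ 2 ^ (n+1) * ENNReal.ofReal (d/2) := by
    rw [hc, ← ENNReal.ofReal_mul (zpow_nonneg hd.le _)]
    have h2 : (2 : ℝ≥0∞) ^ (n+1) * ENNReal.ofReal (d/2)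
        = ENNReal.ofReal (2 ^ (n+1) * (d/2)) := by
      rw [ENNReal.ofReal_mul (by positivity)]
      congr 1
      rw [← ENNReal.ofReal_ofNat 2, ← ENNReal.ofReal_pow (by norm_num)]
    rw [h2]
    refine ENNReal.ofReal_le_ofReal ?_
    have hcalc : d ^ ((1:ℤ) - n) * (3*d/2) ^ n = (3/2) ^ n * d := by
      rw [zpow_sub₀ hd.ne', zpow_one, zpow_natCast]
      have hdn : (d:ℝ) ^ n ≠ 0 := pow_ne_zero _ hd.ne'
      field_simp
      ring
    rw [hcalc]
    have h32 : ((3:ℝ)/2) ^ n ≤ 2 ^ n := pow_le_pow_left₀ (by norm_num) (by norm_num) n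
    calc (3/2:ℝ) ^ n * d ≤ 2 ^ n * d := mul_le_mul_of_nonneg_right h32 hd.le
    _ ≤ 2 ^ (n+1) * (d/2) := by rw [pow_succ]; ring_nf; exact le_refl _
  calc ENNReal.ofReal (d ^ ((1:ℤ) - n)) * I
      = ENNReal.ofReal (d ^ ((1:ℤ) - n)) * (c * c⁻¹) * I := by rw [hc1, mul_one]
  _ = (ENNReal.ofReal (d ^ ((1:ℤ) - n)) * c) * (c⁻¹ * I) := by ring
  _ ≤ (2 ^ (n+1) * ENNReal.ofReal (d/2)) * (c⁻¹ * I) := mul_le_mul_left key _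
  _ = 2 ^ (n+1) * (c⁻¹ * (ENNReal.ofReal (d/2) * I)) := by ring
  _ ≤ 2 ^ (n+1) * (c⁻¹ * A) := by
      exact mul_le_mul_right (mul_le_mul_right step1 _) _
  _ ≤ 2 ^ (n+1) * CME n D F := mul_le_mul_right step2 _
  _ ≤ 2 ^ (n+1) * ⨆ (D' : Set (ES n)) (_ : D' ⊆ Eᶜ)
        (_ : LipCharLe n D' (max 2 (m:ℝ))), CME n D' F := mul_le_mul_right step3 _


end Paper
end
end
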